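/- arXiv:2508.08669 — 6 statements merged into one kernel-verified Lean document; each statement's English description precedes it below -/
import Mathlib

section
/- Let Z ⊆ ℝ^n, let α > 0, let F, G : Z → ℝ^n, and suppose G is α-strongly monotone on Z, i.e. ⟨z − z', G(z) − G(z')⟩ ≥ α‖z − z'‖₂² for all z, z' ∈ Z. If z* ∈ Z satisfies ⟨z* − z, F(z*)⟩ ≤ 0 for all z ∈ Z and z† ∈ Z satisfies ⟨z† − z, G(z†)⟩ ≤ 0 for all z ∈ Z, then α‖z* − z†‖₂ ≤ ‖F(z*) − G(z*)‖₂. -/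
/-- If `G` is `α`-strongly monotone on `Z`, `z*` solves the variational
inequality for `F` on `Z`, and `z†` solves the variational inequality for `G` on `Z`, then
`α ‖z* − z†‖ ≤ ‖F(z*) − G(z*)‖`. -/
theorem variational_inequality_perturbation_bound
    {n : ℕ} (Z : Set (EuclideanSpace ℝ (Fin n))) (α : ℝ) (hα : 0 < α)
    (F G : EuclideanSpace ℝ (Fin n) → EuclideanSpace ℝ (Fin n))
    (hGmono : ∀ z ∈ Z, ∀ z' ∈ Z,
      α * ‖z - z'‖ ^ 2 ≤ (inner ℝ (z - z') (G z - G z') : ℝ))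
    (zstar zdag : EuclideanSpace ℝ (Fin n)) (hzstar : zstar ∈ Z) (hzdag : zdag ∈ Z)
    (hviF : ∀ z ∈ Z, (inner ℝ (zstar - z) (F zstar) : ℝ) ≤ 0)
    (hviG : ∀ z ∈ Z, (inner ℝ (zdag - z) (G zdag) : ℝ) ≤ 0) :
    α * ‖zstar - zdag‖ ≤ ‖F zstar - G zstar‖ := by
  set d := zstar - zdag with hd
  rcases eq_or_ne d 0 with h0 | h0
  · simp [h0]
  have hdpos : (0:ℝ) < ‖d‖ := norm_pos_iff.mpr h0
  have h1 : α * ‖d‖ ^ 2 ≤ (inner ℝ d (G zstar - G zdag) : ℝ) :=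
    hGmono zstar hzstar zdag hzdag
  have h2 : (inner ℝ d (F zstar) : ℝ) ≤ 0 := hviF zdag hzdag
  have h3 : (inner ℝ (zdag - zstar) (G zdag) : ℝ) ≤ 0 := hviG zstar hzstar
  have h3' : (0:ℝ) ≤ inner ℝ d (G zdag) := by
    have : zdag - zstar = -d := by simp [hd]
    rw [this, inner_neg_left] at h3
    linarith
  have key : α * ‖d‖ ^ 2 ≤ (inner ℝ d (G zstar - F zstar) : ℝ) := by
    have := inner_sub_right (𝕜 := ℝ) d (G zstar) (G zdag)
    have := inner_sub_right (𝕜 := ℝ) d (G zstar) (F zstar)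
    rw [inner_sub_right] at h1 ⊢
    linarith
  have cs : (inner ℝ d (G zstar - F zstar) : ℝ) ≤ ‖d‖ * ‖F zstar - G zstar‖ := by
    calc (inner ℝ d (G zstar - F zstar) : ℝ) ≤ ‖d‖ * ‖G zstar - F zstar‖ :=
          real_inner_le_norm _ _
      _ = ‖d‖ * ‖F zstar - G zstar‖ := by rw [norm_sub_rev (G zstar)]
  have : α * ‖d‖ ^ 2 ≤ ‖d‖ * ‖F zstar - G zstar‖ := le_trans key cs
  nlinarith [hdpos]
end

section
/- For the gradient operator F of the modified 4-player game, the monotonicity gap is independent of the payoff pair: for all z, z' ∈ Z and all payoff pairs R = (R₁, R₂) and R' = (R₁', R₂'), one has ⟨z − z', F(z; R) − F(z'; R)⟩ = ⟨z − z', F(z; R') − F(z'; R')⟩. In particular, F(·; R) is α-strongly monotone (respectively strictly monotone) on Z for one payoff pair R if and only if it is so for every payoff pair. -/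
noncomputable section

/-- `ℝⁿ` with the Euclidean norm. -/
abbrev Vec (n : ℕ) := EuclideanSpace ℝ (Fin n)

/-- The standard simplex `Δₙ = {x : xⱼ ≥ 0, ∑ⱼ xⱼ = 1}`. -/
def Δ (n : ℕ) : Set (Vec n) := {x | (∀ j, 0 ≤ x j) ∧ ∑ j, x j = 1}

/-- Matrix–vector product `M x`. -/
def mv {m n : ℕ} (M : Matrix (Fin m) (Fin n) ℝ) (x : Vec n) : Vec m :=
  WithLp.toLp 2 (fun k => ∑ j, M k j * x j)

/-- Joint strategy space of the modified 4-player game: `z = (π₁, π₂, p₁, p₂)`. -/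
abbrev Joint (a₁ a₂ : ℕ) := Vec a₁ × Vec a₂ × Vec a₂ × Vec a₁

/-- Membership in `Z = Δ_{a₁} × Δ_{a₂} × Δ_{a₂} × Δ_{a₁}`. -/
def inZ {a₁ a₂ : ℕ} (z : Joint a₁ a₂) : Prop :=
  z.1 ∈ Δ a₁ ∧ z.2.1 ∈ Δ a₂ ∧ z.2.2.1 ∈ Δ a₂ ∧ z.2.2.2 ∈ Δ a₁

/-- The standard inner product on the joint space. -/
def jip {a₁ a₂ : ℕ} (z w : Joint a₁ a₂) : ℝ :=
  (inner ℝ z.1 w.1 : ℝ) + (inner ℝ z.2.1 w.2.1 : ℝ)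
    + (inner ℝ z.2.2.1 w.2.2.1 : ℝ) + (inner ℝ z.2.2.2 w.2.2.2 : ℝ)

/-- The squared Euclidean norm on the joint space. -/
def jnormSq {a₁ a₂ : ℕ} (z : Joint a₁ a₂) : ℝ :=
  ‖z.1‖ ^ 2 + ‖z.2.1‖ ^ 2 + ‖z.2.2.1‖ ^ 2 + ‖z.2.2.2‖ ^ 2

/-- Objective `J₁(z; R) = −π₁ᵀ R₁ p₁ − D₁(p₁, π₂) + ε₁ ν₁(π₁)` of player 1. -/
def J1 {a₁ a₂ : ℕ} (ε₁ : ℝ) (ν₁ : Vec a₁ → ℝ) (D₁ : Vec a₂ → Vec a₂ → ℝ)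
    (R₁ : Matrix (Fin a₁) (Fin a₂) ℝ) (z : Joint a₁ a₂) : ℝ :=
  -(inner ℝ z.1 (mv R₁ z.2.2.1) : ℝ) - D₁ z.2.2.1 z.2.1 + ε₁ * ν₁ z.1

/-- Objective `J₂(z; R) = −π₂ᵀ R₂ p₂ − D₂(p₂, π₁) + ε₂ ν₂(π₂)` of player 2. -/
def J2 {a₁ a₂ : ℕ} (ε₂ : ℝ) (ν₂ : Vec a₂ → ℝ) (D₂ : Vec a₁ → Vec a₁ → ℝ)
    (R₂ : Matrix (Fin a₂) (Fin a₁) ℝ) (z : Joint a₁ a₂) : ℝ :=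
  -(inner ℝ z.2.1 (mv R₂ z.2.2.2) : ℝ) - D₂ z.2.2.2 z.1 + ε₂ * ν₂ z.2.1

/-- Nash equilibrium of the modified 4-player game: each of the four components minimizes
its owner's objective over its simplex, the others fixed (`J̄ᵢ = −Jᵢ` for the adversaries). -/
def IsNash {a₁ a₂ : ℕ} (ε₁ ε₂ : ℝ) (ν₁ : Vec a₁ → ℝ) (ν₂ : Vec a₂ → ℝ)
    (D₁ : Vec a₂ → Vec a₂ → ℝ) (D₂ : Vec a₁ → Vec a₁ → ℝ)
    (R₁ : Matrix (Fin a₁) (Fin a₂) ℝ) (R₂ : Matrix (Fin a₂) (Fin a₁) ℝ)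
    (z : Joint a₁ a₂) : Prop :=
  inZ z
    ∧ (∀ q ∈ Δ a₁, J1 ε₁ ν₁ D₁ R₁ z ≤ J1 ε₁ ν₁ D₁ R₁ (q, z.2.1, z.2.2.1, z.2.2.2))
    ∧ (∀ q ∈ Δ a₂, J2 ε₂ ν₂ D₂ R₂ z ≤ J2 ε₂ ν₂ D₂ R₂ (z.1, q, z.2.2.1, z.2.2.2))
    ∧ (∀ q ∈ Δ a₂, -J1 ε₁ ν₁ D₁ R₁ z ≤ -J1 ε₁ ν₁ D₁ R₁ (z.1, z.2.1, q, z.2.2.2))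
    ∧ (∀ q ∈ Δ a₁, -J2 ε₂ ν₂ D₂ R₂ z ≤ -J2 ε₂ ν₂ D₂ R₂ (z.1, z.2.1, z.2.2.1, q))

/-- The gradient operator `F(z; R)` of the modified 4-player game. -/
def Fop {a₁ a₂ : ℕ} (ε₁ ε₂ : ℝ) (ν₁ : Vec a₁ → ℝ) (ν₂ : Vec a₂ → ℝ)
    (D₁ : Vec a₂ → Vec a₂ → ℝ) (D₂ : Vec a₁ → Vec a₁ → ℝ)
    (R₁ : Matrix (Fin a₁) (Fin a₂) ℝ) (R₂ : Matrix (Fin a₂) (Fin a₁) ℝ)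
    (z : Joint a₁ a₂) : Joint a₁ a₂ :=
  (-(mv R₁ z.2.2.1) + ε₁ • gradient ν₁ z.1,
   -(mv R₂ z.2.2.2) + ε₂ • gradient ν₂ z.2.1,
   mv R₁.transpose z.1 + gradient (fun p => D₁ p z.2.1) z.2.2.1,
   mv R₂.transpose z.2.1 + gradient (fun p => D₂ p z.1) z.2.2.2)

/-- `α`-strong monotonicity of the gradient operator on `Z`. -/
def StronglyMonotoneOnZ {a₁ a₂ : ℕ} (α ε₁ ε₂ : ℝ) (ν₁ : Vec a₁ → ℝ) (ν₂ : Vec a₂ → ℝ)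
    (D₁ : Vec a₂ → Vec a₂ → ℝ) (D₂ : Vec a₁ → Vec a₁ → ℝ)
    (R₁ : Matrix (Fin a₁) (Fin a₂) ℝ) (R₂ : Matrix (Fin a₂) (Fin a₁) ℝ) : Prop :=
  ∀ z z' : Joint a₁ a₂, inZ z → inZ z' →
    α * jnormSq (z - z')
      ≤ jip (z - z') (Fop ε₁ ε₂ ν₁ ν₂ D₁ D₂ R₁ R₂ z - Fop ε₁ ε₂ ν₁ ν₂ D₁ D₂ R₁ R₂ z')

/-- Strict monotonicity of the gradient operator on `Z`. -/
def StrictlyMonotoneOnZ {a₁ a₂ : ℕ} (ε₁ ε₂ : ℝ) (ν₁ : Vec a₁ → ℝ) (ν₂ : Vec a₂ → ℝ)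
    (D₁ : Vec a₂ → Vec a₂ → ℝ) (D₂ : Vec a₁ → Vec a₁ → ℝ)
    (R₁ : Matrix (Fin a₁) (Fin a₂) ℝ) (R₂ : Matrix (Fin a₂) (Fin a₁) ℝ) : Prop :=
  ∀ z z' : Joint a₁ a₂, inZ z → inZ z' → z ≠ z' →
    0 < jip (z - z') (Fop ε₁ ε₂ ν₁ ν₂ D₁ D₂ R₁ R₂ z - Fop ε₁ ε₂ ν₁ ν₂ D₁ D₂ R₁ R₂ z')

/-- Entrywise `L∞` distance between payoff pairs. -/
def Rdist {a₁ a₂ : ℕ} (R₁ R₁' : Matrix (Fin a₁) (Fin a₂) ℝ)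
    (R₂ R₂' : Matrix (Fin a₂) (Fin a₁) ℝ) : ℝ :=
  max (⨆ kj : Fin a₁ × Fin a₂, |R₁ kj.1 kj.2 - R₁' kj.1 kj.2|)
      (⨆ kj : Fin a₂ × Fin a₁, |R₂ kj.1 kj.2 - R₂' kj.1 kj.2|)

lemma mv_sub {m n : ℕ} (M : Matrix (Fin m) (Fin n) ℝ) (x y : Vec n) :
    mv M (x - y) = mv M x - mv M y := by
  ext k
  simp [mv, mul_sub, Finset.sum_sub_distrib]

lemma inner_mv {m n : ℕ} (M : Matrix (Fin m) (Fin n) ℝ) (x : Vec m) (y : Vec n) :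
    (inner ℝ x (mv M y) : ℝ) = (inner ℝ (mv M.transpose x) y : ℝ) := by
  simp only [mv, WithLp.ofLp_toLp, PiLp.inner_apply, RCLike.inner_apply, starRingEnd_apply, star_trivial,
    Matrix.transpose_apply, Finset.mul_sum, Finset.sum_mul]
  rw [Finset.sum_comm]
  congr 1; funext j; congr 1; funext k; ring

/-- The R-free part of the monotonicity gap. -/
def Gap {a₁ a₂ : ℕ} (ε₁ ε₂ : ℝ) (ν₁ : Vec a₁ → ℝ) (ν₂ : Vec a₂ → ℝ)
    (D₁ : Vec a₂ → Vec a₂ → ℝ) (D₂ : Vec a₁ → Vec a₁ → ℝ)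
    (z z' : Joint a₁ a₂) : ℝ :=
  (inner ℝ (z.1 - z'.1) (ε₁ • gradient ν₁ z.1 - ε₁ • gradient ν₁ z'.1) : ℝ)
  + (inner ℝ (z.2.1 - z'.2.1) (ε₂ • gradient ν₂ z.2.1 - ε₂ • gradient ν₂ z'.2.1) : ℝ)
  + (inner ℝ (z.2.2.1 - z'.2.2.1)
      (gradient (fun p => D₁ p z.2.1) z.2.2.1 - gradient (fun p => D₁ p z'.2.1) z'.2.2.1) : ℝ)
  + (inner ℝ (z.2.2.2 - z'.2.2.2)
      (gradient (fun p => D₂ p z.1) z.2.2.2 - gradient (fun p => D₂ p z'.1) z'.2.2.2) : ℝ)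

lemma gap_eq {a₁ a₂ : ℕ} (ε₁ ε₂ : ℝ) (ν₁ : Vec a₁ → ℝ) (ν₂ : Vec a₂ → ℝ)
    (D₁ : Vec a₂ → Vec a₂ → ℝ) (D₂ : Vec a₁ → Vec a₁ → ℝ)
    (R₁ : Matrix (Fin a₁) (Fin a₂) ℝ) (R₂ : Matrix (Fin a₂) (Fin a₁) ℝ)
    (z z' : Joint a₁ a₂) :
    jip (z - z') (Fop ε₁ ε₂ ν₁ ν₂ D₁ D₂ R₁ R₂ z - Fop ε₁ ε₂ ν₁ ν₂ D₁ D₂ R₁ R₂ z')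
      = Gap ε₁ ε₂ ν₁ ν₂ D₁ D₂ z z' := by
  obtain ⟨x1, x2, x3, x4⟩ := z
  obtain ⟨y1, y2, y3, y4⟩ := z'
  simp only [jip, Fop, Gap, Prod.fst_sub, Prod.snd_sub, Prod.mk_sub_mk]
  have e1 : ((-(mv R₁ x3) + ε₁ • gradient ν₁ x1) - (-(mv R₁ y3) + ε₁ • gradient ν₁ y1))
      = -(mv R₁ (x3 - y3)) + (ε₁ • gradient ν₁ x1 - ε₁ • gradient ν₁ y1) := by
    rw [mv_sub]; abel
  have e2 : ((-(mv R₂ x4) + ε₂ • gradient ν₂ x2) - (-(mv R₂ y4) + ε₂ • gradient ν₂ y2))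
      = -(mv R₂ (x4 - y4)) + (ε₂ • gradient ν₂ x2 - ε₂ • gradient ν₂ y2) := by
    rw [mv_sub]; abel
  have e3 : ((mv R₁.transpose x1 + gradient (fun p => D₁ p x2) x3)
        - (mv R₁.transpose y1 + gradient (fun p => D₁ p y2) y3))
      = mv R₁.transpose (x1 - y1)
        + (gradient (fun p => D₁ p x2) x3 - gradient (fun p => D₁ p y2) y3) := by
    rw [mv_sub]; abel
  have e4 : ((mv R₂.transpose x2 + gradient (fun p => D₂ p x1) x4)
        - (mv R₂.transpose y2 + gradient (fun p => D₂ p y1) y4))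
      = mv R₂.transpose (x2 - y2)
        + (gradient (fun p => D₂ p x1) x4 - gradient (fun p => D₂ p y1) y4) := by
    rw [mv_sub]; abel
  rw [e1, e2, e3, e4]
  simp only [inner_add_right, inner_neg_right]
  have c1 : (inner ℝ (x3 - y3) (mv R₁.transpose (x1 - y1)) : ℝ)
      = (inner ℝ (x1 - y1) (mv R₁ (x3 - y3)) : ℝ) := by
    rw [inner_mv, Matrix.transpose_transpose, real_inner_comm]
  have c2 : (inner ℝ (x4 - y4) (mv R₂.transpose (x2 - y2)) : ℝ)
      = (inner ℝ (x2 - y2) (mv R₂ (x4 - y4)) : ℝ) := by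
    rw [inner_mv, Matrix.transpose_transpose, real_inner_comm]
  rw [c1, c2]
  ring


/-- The monotonicity gap of the gradient operator of the modified 4-player
game is independent of the payoff pair; in particular `F(·; R)` is `α`-strongly monotone
(resp. strictly monotone) on `Z` for one payoff pair iff it is so for every payoff pair. -/
theorem monotonicity_gap_independent_of_payoffs
    {a₁ a₂ : ℕ} (ha₁ : 1 ≤ a₁) (ha₂ : 1 ≤ a₂)
    (ε₁ ε₂ : ℝ) (hε₁ : 0 < ε₁) (hε₂ : 0 < ε₂)
    (ν₁ : Vec a₁ → ℝ) (ν₂ : Vec a₂ → ℝ)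
    (D₁ : Vec a₂ → Vec a₂ → ℝ) (D₂ : Vec a₁ → Vec a₁ → ℝ)
    (hν₁ : Differentiable ℝ ν₁) (hν₂ : Differentiable ℝ ν₂)
    (hD₁ : Differentiable ℝ (fun x : Vec a₂ × Vec a₂ => D₁ x.1 x.2))
    (hD₂ : Differentiable ℝ (fun x : Vec a₁ × Vec a₁ => D₂ x.1 x.2)) :
    (∀ (R₁ R₁' : Matrix (Fin a₁) (Fin a₂) ℝ) (R₂ R₂' : Matrix (Fin a₂) (Fin a₁) ℝ)
        (z z' : Joint a₁ a₂), inZ z → inZ z' →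
      jip (z - z') (Fop ε₁ ε₂ ν₁ ν₂ D₁ D₂ R₁ R₂ z - Fop ε₁ ε₂ ν₁ ν₂ D₁ D₂ R₁ R₂ z')
        = jip (z - z') (Fop ε₁ ε₂ ν₁ ν₂ D₁ D₂ R₁' R₂' z - Fop ε₁ ε₂ ν₁ ν₂ D₁ D₂ R₁' R₂' z'))
    ∧ (∀ (α : ℝ) (R₁ R₁' : Matrix (Fin a₁) (Fin a₂) ℝ) (R₂ R₂' : Matrix (Fin a₂) (Fin a₁) ℝ),
        StronglyMonotoneOnZ α ε₁ ε₂ ν₁ ν₂ D₁ D₂ R₁ R₂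
          ↔ StronglyMonotoneOnZ α ε₁ ε₂ ν₁ ν₂ D₁ D₂ R₁' R₂')
    ∧ (∀ (R₁ R₁' : Matrix (Fin a₁) (Fin a₂) ℝ) (R₂ R₂' : Matrix (Fin a₂) (Fin a₁) ℝ),
        StrictlyMonotoneOnZ ε₁ ε₂ ν₁ ν₂ D₁ D₂ R₁ R₂
          ↔ StrictlyMonotoneOnZ ε₁ ε₂ ν₁ ν₂ D₁ D₂ R₁' R₂') := by
  have key : ∀ (R₁ : Matrix (Fin a₁) (Fin a₂) ℝ) (R₂ : Matrix (Fin a₂) (Fin a₁) ℝ)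
      (z z' : Joint a₁ a₂),
      jip (z - z') (Fop ε₁ ε₂ ν₁ ν₂ D₁ D₂ R₁ R₂ z - Fop ε₁ ε₂ ν₁ ν₂ D₁ D₂ R₁ R₂ z')
        = Gap ε₁ ε₂ ν₁ ν₂ D₁ D₂ z z' := fun R₁ R₂ z z' => gap_eq ..
  refine ⟨fun R₁ R₁' R₂ R₂' z z' _ _ => by rw [key, key], ?_, ?_⟩
  · intro α R₁ R₁' R₂ R₂'
    constructor <;> intro h z z' hz hz' <;>
      [rw [key]; rw [key]] <;> [rw [← key R₁ R₂]; rw [← key R₁' R₂']] <;> exact h z z' hz hz'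
  · intro R₁ R₁' R₂ R₂'
    constructor <;> intro h z z' hz hz' hne <;>
      [rw [key]; rw [key]] <;> [rw [← key R₁ R₂]; rw [← key R₁' R₂']] <;>
      exact h z z' hz hz' hne
end
end

section
/- Suppose the gradient operator of the modified 4-player game is α-strongly monotone on Z for every payoff pair. Let R and R' be two payoff pairs and let z* = (π₁*, π₂*, p₁*, p₂*) be a Nash equilibrium of the game with payoff pair R and z† = (π₁†, π₂†, p₁†, p₂†) a Nash equilibrium of the game with payoff pair R'. Then ‖z* − z†‖₂ ≤ 2(√a₁ + √a₂)‖R − R'‖_∞ / α; in particular ‖(π₁*, π₂*) − (π₁†, π₂†)‖₂ ≤ 2(√a₁ + √a₂)‖R − R'‖_∞ / α. -/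
set_option maxHeartbeats 1000000

noncomputable section

section AuxLemmas

lemma convexDelta (n : ℕ) : Convex ℝ (Δ n) := by
  intro x hx y hy s t hs ht hst
  refine ⟨fun j => ?_, ?_⟩
  · have h : (s • x + t • y) j = s * x j + t * y j := rfl
    rw [h]
    have := hx.1 j; have := hy.1 j
    positivity
  · have h : ∀ j, (s • x + t • y) j = s * x j + t * y j := fun j => rfl
    simp only [h, Finset.sum_add_distrib, ← Finset.mul_sum, hx.2, hy.2, mul_one]
    exact hst

lemma varineq {n : ℕ} {f : Vec n → ℝ} {g x q : Vec n}
    (hg : HasGradientAt f g x) (hx : x ∈ Δ n) (hq : q ∈ Δ n)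
    (hmin : ∀ y ∈ Δ n, f x ≤ f y) :
    0 ≤ (inner ℝ g (q - x) : ℝ) := by
  have hseg : segment ℝ x q ⊆ Δ n := (convexDelta n).segment_subset hx hq
  have hcone := sub_mem_posTangentConeAt_of_segment_subset hseg
  have hlmin : IsLocalMinOn f (Δ n) x :=
    (isMinOn_iff.mpr hmin).filter_mono inf_le_right
  have hfd : HasFDerivWithinAt f (InnerProductSpace.toDual ℝ (Vec n) g) (Δ n) x :=
    (hasGradientAt_iff_hasFDerivAt.mp hg).hasFDerivWithinAt
  have h := hlmin.hasFDerivWithinAt_nonneg hfd hcone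
  simpa [InnerProductSpace.toDual_apply_apply] using h

lemma hasGradient_inner_const {n : ℕ} (c : Vec n) (x : Vec n) :
    HasGradientAt (fun v : Vec n => (inner ℝ v c : ℝ)) c x := by
  rw [hasGradientAt_iff_hasFDerivAt]
  have h : (fun v : Vec n => (inner ℝ v c : ℝ))
      = fun v => (InnerProductSpace.toDual ℝ (Vec n) c) v := by
    funext v
    simp only [InnerProductSpace.toDual_apply_apply, PiLp.inner_apply, RCLike.inner_apply,
      conj_trivial]
    exact Finset.sum_congr rfl fun i _ => mul_comm _ _
  rw [h]
  exact (InnerProductSpace.toDual ℝ (Vec n) c).hasFDerivAt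

lemma gradPlayer {n : ℕ} (ε : ℝ) (ν : Vec n → ℝ) (hν : Differentiable ℝ ν)
    (c : Vec n) (K : ℝ) (x : Vec n) :
    HasGradientAt (fun π : Vec n => -(inner ℝ π c : ℝ) - K + ε * ν π)
      (-c + ε • gradient ν x) x := by
  rw [hasGradientAt_iff_hasFDerivAt]
  have h1 : HasFDerivAt (fun v : Vec n => (inner ℝ v c : ℝ))
      (InnerProductSpace.toDual ℝ (Vec n) c) x :=
    hasGradientAt_iff_hasFDerivAt.mp (hasGradient_inner_const c x)
  have h2 : HasFDerivAt ν (InnerProductSpace.toDual ℝ (Vec n) (gradient ν x)) x :=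
    hasGradientAt_iff_hasFDerivAt.mp (hν x).hasGradientAt
  have h3 := (h1.neg.sub_const K).add (h2.const_mul ε)
  convert h3 using 1
  · rfl
  · rfl
  · rfl
  · simp [map_add, map_neg, map_smul]

lemma gradAdversary {n : ℕ} (c : Vec n) (D : Vec n → ℝ) (hD : Differentiable ℝ D)
    (K : ℝ) (x : Vec n) :
    HasGradientAt (fun p : Vec n => (inner ℝ p c : ℝ) + D p - K)
      (c + gradient D x) x := by
  rw [hasGradientAt_iff_hasFDerivAt]
  have h1 := hasGradientAt_iff_hasFDerivAt.mp (hasGradient_inner_const c x)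
  have h2 := hasGradientAt_iff_hasFDerivAt.mp (hD x).hasGradientAt
  have h3 := (h1.add h2).sub_const K
  convert h3 using 1
  · rfl
  · rfl
  · rfl
  · simp [map_add]

lemma mv_diff_norm {m n : ℕ} (M M' : Matrix (Fin m) (Fin n) ℝ) {x : Vec n}
    (hx : x ∈ Δ n) {d : ℝ} (hd0 : 0 ≤ d) (hd : ∀ k j, |M k j - M' k j| ≤ d) :
    ‖mv M x - mv M' x‖ ≤ Real.sqrt m * d := by
  have hentry : ∀ k, |(mv M x - mv M' x) k| ≤ d := by
    intro k
    have h : (mv M x - mv M' x) k = ∑ j, (M k j - M' k j) * x j := by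
      simp [mv, sub_mul, Finset.sum_sub_distrib]
    rw [h]
    calc |∑ j, (M k j - M' k j) * x j| ≤ ∑ j, |(M k j - M' k j) * x j| :=
          Finset.abs_sum_le_sum_abs _ _
      _ ≤ ∑ j, d * x j := by
          refine Finset.sum_le_sum fun j _ => ?_
          rw [abs_mul, abs_of_nonneg (hx.1 j)]
          exact mul_le_mul_of_nonneg_right (hd k j) (hx.1 j)
      _ = d := by rw [← Finset.mul_sum, hx.2, mul_one]
  rw [EuclideanSpace.norm_eq]
  have hsum : ∑ k, ‖(mv M x - mv M' x) k‖ ^ 2 ≤ (m : ℝ) * d ^ 2 := by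
    calc ∑ k, ‖(mv M x - mv M' x) k‖ ^ 2 ≤ ∑ _k : Fin m, d ^ 2 := by
          refine Finset.sum_le_sum fun k _ => ?_
          rw [Real.norm_eq_abs]
          exact pow_le_pow_left₀ (abs_nonneg _) (hentry k) 2
      _ = (m : ℝ) * d ^ 2 := by simp [Finset.sum_const, mul_comm]
  calc Real.sqrt (∑ k, ‖(mv M x - mv M' x) k‖ ^ 2) ≤ Real.sqrt ((m : ℝ) * d ^ 2) :=
        Real.sqrt_le_sqrt hsum
    _ = Real.sqrt m * d := by
        rw [Real.sqrt_mul (Nat.cast_nonneg m), Real.sqrt_sq hd0]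

end AuxLemmas

/-- If the gradient operator of the modified 4-player game is `α`-strongly
monotone on `Z` for every payoff pair, then Nash equilibria for payoff pairs `R` and `R'`
satisfy `‖z* − z†‖₂ ≤ 2(√a₁ + √a₂)‖R − R'‖_∞ / α`, and in particular the policy parts
satisfy the same bound. -/


theorem nash_lipschitz_in_payoffs
    {a₁ a₂ : ℕ} (ha₁ : 1 ≤ a₁) (ha₂ : 1 ≤ a₂)
    (ε₁ ε₂ : ℝ) (hε₁ : 0 < ε₁) (hε₂ : 0 < ε₂) (α : ℝ) (hα : 0 < α)
    (ν₁ : Vec a₁ → ℝ) (ν₂ : Vec a₂ → ℝ)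
    (D₁ : Vec a₂ → Vec a₂ → ℝ) (D₂ : Vec a₁ → Vec a₁ → ℝ)
    (hν₁ : Differentiable ℝ ν₁) (hν₂ : Differentiable ℝ ν₂)
    (hD₁ : Differentiable ℝ (fun x : Vec a₂ × Vec a₂ => D₁ x.1 x.2))
    (hD₂ : Differentiable ℝ (fun x : Vec a₁ × Vec a₁ => D₂ x.1 x.2))
    (hmono : ∀ (R₁ : Matrix (Fin a₁) (Fin a₂) ℝ) (R₂ : Matrix (Fin a₂) (Fin a₁) ℝ),
      StronglyMonotoneOnZ α ε₁ ε₂ ν₁ ν₂ D₁ D₂ R₁ R₂)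
    (R₁ R₁' : Matrix (Fin a₁) (Fin a₂) ℝ) (R₂ R₂' : Matrix (Fin a₂) (Fin a₁) ℝ)
    (zstar zdag : Joint a₁ a₂)
    (hzstar : IsNash ε₁ ε₂ ν₁ ν₂ D₁ D₂ R₁ R₂ zstar)
    (hzdag : IsNash ε₁ ε₂ ν₁ ν₂ D₁ D₂ R₁' R₂' zdag) :
    Real.sqrt (jnormSq (zstar - zdag))
      ≤ 2 * (Real.sqrt a₁ + Real.sqrt a₂) * Rdist R₁ R₁' R₂ R₂' / α
    ∧ Real.sqrt (‖zstar.1 - zdag.1‖ ^ 2 + ‖zstar.2.1 - zdag.2.1‖ ^ 2)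
      ≤ 2 * (Real.sqrt a₁ + Real.sqrt a₂) * Rdist R₁ R₁' R₂ R₂' / α := by
  classical
  obtain ⟨⟨hs1, hs2, hs3, hs4⟩, hP1s, hP2s, hA1s, hA2s⟩ := hzstar
  obtain ⟨⟨hd1, hd2, hd3, hd4⟩, hP1d, hP2d, hA1d, hA2d⟩ := hzdag
  set d := Rdist R₁ R₁' R₂ R₂' with hddef
  have hentry1 : ∀ k j, |R₁ k j - R₁' k j| ≤ d := fun k j =>
    le_trans (le_ciSup (f := fun kj : Fin a₁ × Fin a₂ => |R₁ kj.1 kj.2 - R₁' kj.1 kj.2|)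
      (Set.Finite.bddAbove (Set.finite_range _)) (k, j)) (le_max_left _ _)
  have hentry2 : ∀ k j, |R₂ k j - R₂' k j| ≤ d := fun k j =>
    le_trans (le_ciSup (f := fun kj : Fin a₂ × Fin a₁ => |R₂ kj.1 kj.2 - R₂' kj.1 kj.2|)
      (Set.Finite.bddAbove (Set.finite_range _)) (k, j)) (le_max_right _ _)
  have hd0 : (0 : ℝ) ≤ d := le_trans (abs_nonneg _) (hentry1 ⟨0, ha₁⟩ ⟨0, ha₂⟩)
  have hD₁' : ∀ c : Vec a₂, Differentiable ℝ (fun p : Vec a₂ => D₁ p c) := fun c =>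
    hD₁.comp (differentiable_id.prodMk (differentiable_const c))
  have hD₂' : ∀ c : Vec a₁, Differentiable ℝ (fun p : Vec a₁ => D₂ p c) := fun c =>
    hD₂.comp (differentiable_id.prodMk (differentiable_const c))
  -- variational inequalities at zstar (payoff R), direction zdag
  have v1 : 0 ≤ (inner ℝ (zdag.1 - zstar.1)
      (-(mv R₁ zstar.2.2.1) + ε₁ • gradient ν₁ zstar.1) : ℝ) := by
    rw [real_inner_comm]
    refine varineq (gradPlayer ε₁ ν₁ hν₁ (mv R₁ zstar.2.2.1)
      (D₁ zstar.2.2.1 zstar.2.1) zstar.1) hs1 hd1 ?_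
    intro y hy
    exact hP1s y hy
  have v2 : 0 ≤ (inner ℝ (zdag.2.1 - zstar.2.1)
      (-(mv R₂ zstar.2.2.2) + ε₂ • gradient ν₂ zstar.2.1) : ℝ) := by
    rw [real_inner_comm]
    refine varineq (gradPlayer ε₂ ν₂ hν₂ (mv R₂ zstar.2.2.2)
      (D₂ zstar.2.2.2 zstar.1) zstar.2.1) hs2 hd2 ?_
    intro y hy
    exact hP2s y hy
  have v3 : 0 ≤ (inner ℝ (zdag.2.2.1 - zstar.2.2.1)
      (mv R₁.transpose zstar.1 + gradient (fun p => D₁ p zstar.2.1) zstar.2.2.1) : ℝ) := by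
    rw [real_inner_comm]
    refine varineq (gradAdversary (mv R₁.transpose zstar.1) (fun p => D₁ p zstar.2.1)
      (hD₁' zstar.2.1) (ε₁ * ν₁ zstar.1) zstar.2.2.1) hs3 hd3 ?_
    intro y hy
    have h := hA1s y hy
    have i1 : (inner ℝ zstar.1 (mv R₁ y) : ℝ) = inner ℝ y (mv R₁.transpose zstar.1) := by
      rw [inner_mv]; exact real_inner_comm _ _
    have i2 : (inner ℝ zstar.1 (mv R₁ zstar.2.2.1) : ℝ)
        = inner ℝ zstar.2.2.1 (mv R₁.transpose zstar.1) := by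
      rw [inner_mv]; exact real_inner_comm _ _
    simp only [J1] at h
    show (inner ℝ zstar.2.2.1 (mv R₁.transpose zstar.1) : ℝ) + D₁ zstar.2.2.1 zstar.2.1
        - ε₁ * ν₁ zstar.1
      ≤ (inner ℝ y (mv R₁.transpose zstar.1) : ℝ) + D₁ y zstar.2.1 - ε₁ * ν₁ zstar.1
    linarith [h, i1, i2]
  have v4 : 0 ≤ (inner ℝ (zdag.2.2.2 - zstar.2.2.2)
      (mv R₂.transpose zstar.2.1 + gradient (fun p => D₂ p zstar.1) zstar.2.2.2) : ℝ) := by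
    rw [real_inner_comm]
    refine varineq (gradAdversary (mv R₂.transpose zstar.2.1) (fun p => D₂ p zstar.1)
      (hD₂' zstar.1) (ε₂ * ν₂ zstar.2.1) zstar.2.2.2) hs4 hd4 ?_
    intro y hy
    have h := hA2s y hy
    have i1 : (inner ℝ zstar.2.1 (mv R₂ y) : ℝ) = inner ℝ y (mv R₂.transpose zstar.2.1) := by
      rw [inner_mv]; exact real_inner_comm _ _
    have i2 : (inner ℝ zstar.2.1 (mv R₂ zstar.2.2.2) : ℝ)
        = inner ℝ zstar.2.2.2 (mv R₂.transpose zstar.2.1) := by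
      rw [inner_mv]; exact real_inner_comm _ _
    simp only [J2] at h
    show (inner ℝ zstar.2.2.2 (mv R₂.transpose zstar.2.1) : ℝ) + D₂ zstar.2.2.2 zstar.1
        - ε₂ * ν₂ zstar.2.1
      ≤ (inner ℝ y (mv R₂.transpose zstar.2.1) : ℝ) + D₂ y zstar.1 - ε₂ * ν₂ zstar.2.1
    linarith [h, i1, i2]
  have hVIs : 0 ≤ jip (zdag - zstar) (Fop ε₁ ε₂ ν₁ ν₂ D₁ D₂ R₁ R₂ zstar) := by
    simp only [jip, Fop, Prod.fst_sub, Prod.snd_sub]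
    exact add_nonneg (add_nonneg (add_nonneg v1 v2) v3) v4
  -- variational inequalities at zdag (payoff R'), direction zstar
  have w1 : 0 ≤ (inner ℝ (zstar.1 - zdag.1)
      (-(mv R₁' zdag.2.2.1) + ε₁ • gradient ν₁ zdag.1) : ℝ) := by
    rw [real_inner_comm]
    refine varineq (gradPlayer ε₁ ν₁ hν₁ (mv R₁' zdag.2.2.1)
      (D₁ zdag.2.2.1 zdag.2.1) zdag.1) hd1 hs1 ?_
    intro y hy
    exact hP1d y hy
  have w2 : 0 ≤ (inner ℝ (zstar.2.1 - zdag.2.1)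
      (-(mv R₂' zdag.2.2.2) + ε₂ • gradient ν₂ zdag.2.1) : ℝ) := by
    rw [real_inner_comm]
    refine varineq (gradPlayer ε₂ ν₂ hν₂ (mv R₂' zdag.2.2.2)
      (D₂ zdag.2.2.2 zdag.1) zdag.2.1) hd2 hs2 ?_
    intro y hy
    exact hP2d y hy
  have w3 : 0 ≤ (inner ℝ (zstar.2.2.1 - zdag.2.2.1)
      (mv R₁'.transpose zdag.1 + gradient (fun p => D₁ p zdag.2.1) zdag.2.2.1) : ℝ) := by
    rw [real_inner_comm]
    refine varineq (gradAdversary (mv R₁'.transpose zdag.1) (fun p => D₁ p zdag.2.1)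
      (hD₁' zdag.2.1) (ε₁ * ν₁ zdag.1) zdag.2.2.1) hd3 hs3 ?_
    intro y hy
    have h := hA1d y hy
    have i1 : (inner ℝ zdag.1 (mv R₁' y) : ℝ) = inner ℝ y (mv R₁'.transpose zdag.1) := by
      rw [inner_mv]; exact real_inner_comm _ _
    have i2 : (inner ℝ zdag.1 (mv R₁' zdag.2.2.1) : ℝ)
        = inner ℝ zdag.2.2.1 (mv R₁'.transpose zdag.1) := by
      rw [inner_mv]; exact real_inner_comm _ _
    simp only [J1] at h
    show (inner ℝ zdag.2.2.1 (mv R₁'.transpose zdag.1) : ℝ) + D₁ zdag.2.2.1 zdag.2.1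
        - ε₁ * ν₁ zdag.1
      ≤ (inner ℝ y (mv R₁'.transpose zdag.1) : ℝ) + D₁ y zdag.2.1 - ε₁ * ν₁ zdag.1
    linarith [h, i1, i2]
  have w4 : 0 ≤ (inner ℝ (zstar.2.2.2 - zdag.2.2.2)
      (mv R₂'.transpose zdag.2.1 + gradient (fun p => D₂ p zdag.1) zdag.2.2.2) : ℝ) := by
    rw [real_inner_comm]
    refine varineq (gradAdversary (mv R₂'.transpose zdag.2.1) (fun p => D₂ p zdag.1)
      (hD₂' zdag.1) (ε₂ * ν₂ zdag.2.1) zdag.2.2.2) hd4 hs4 ?_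
    intro y hy
    have h := hA2d y hy
    have i1 : (inner ℝ zdag.2.1 (mv R₂' y) : ℝ) = inner ℝ y (mv R₂'.transpose zdag.2.1) := by
      rw [inner_mv]; exact real_inner_comm _ _
    have i2 : (inner ℝ zdag.2.1 (mv R₂' zdag.2.2.2) : ℝ)
        = inner ℝ zdag.2.2.2 (mv R₂'.transpose zdag.2.1) := by
      rw [inner_mv]; exact real_inner_comm _ _
    simp only [J2] at h
    show (inner ℝ zdag.2.2.2 (mv R₂'.transpose zdag.2.1) : ℝ) + D₂ zdag.2.2.2 zdag.1
        - ε₂ * ν₂ zdag.2.1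
      ≤ (inner ℝ y (mv R₂'.transpose zdag.2.1) : ℝ) + D₂ y zdag.1 - ε₂ * ν₂ zdag.2.1
    linarith [h, i1, i2]
  have hVId : 0 ≤ jip (zstar - zdag) (Fop ε₁ ε₂ ν₁ ν₂ D₁ D₂ R₁' R₂' zdag) := by
    simp only [jip, Fop, Prod.fst_sub, Prod.snd_sub]
    exact add_nonneg (add_nonneg (add_nonneg w1 w2) w3) w4
  -- jip algebra
  have jip_sub : ∀ w u v : Joint a₁ a₂, jip w (u - v) = jip w u - jip w v := by
    intro w u v
    simp only [jip, Prod.fst_sub, Prod.snd_sub, inner_sub_right]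
    ring
  have jip_flip : ∀ F : Joint a₁ a₂, jip (zdag - zstar) F = - jip (zstar - zdag) F := by
    intro F
    have e : ∀ (n : ℕ) (a b c : Vec n), (inner ℝ (a - b) c : ℝ) = - inner ℝ (b - a) c := by
      intro n a b c
      rw [← inner_neg_left, neg_sub]
    simp only [jip, Prod.fst_sub, Prod.snd_sub]
    rw [e _ zdag.1 zstar.1, e _ zdag.2.1 zstar.2.1, e _ zdag.2.2.1 zstar.2.2.1,
      e _ zdag.2.2.2 zstar.2.2.2]
    ring
  have hm := hmono R₁ R₂ zstar zdag ⟨hs1, hs2, hs3, hs4⟩ ⟨hd1, hd2, hd3, hd4⟩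
  have key : α * jnormSq (zstar - zdag)
      ≤ jip (zstar - zdag) (Fop ε₁ ε₂ ν₁ ν₂ D₁ D₂ R₁' R₂' zdag
          - Fop ε₁ ε₂ ν₁ ν₂ D₁ D₂ R₁ R₂ zdag) := by
    have h1 := jip_flip (Fop ε₁ ε₂ ν₁ ν₂ D₁ D₂ R₁ R₂ zstar)
    have h2 := jip_sub (zstar - zdag) (Fop ε₁ ε₂ ν₁ ν₂ D₁ D₂ R₁ R₂ zstar)
      (Fop ε₁ ε₂ ν₁ ν₂ D₁ D₂ R₁ R₂ zdag)
    have h3 := jip_sub (zstar - zdag) (Fop ε₁ ε₂ ν₁ ν₂ D₁ D₂ R₁' R₂' zdag)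
      (Fop ε₁ ε₂ ν₁ ν₂ D₁ D₂ R₁ R₂ zdag)
    linarith [hm, hVIs, hVId]
  -- components of the difference of operators
  have c1 : (Fop ε₁ ε₂ ν₁ ν₂ D₁ D₂ R₁' R₂' zdag - Fop ε₁ ε₂ ν₁ ν₂ D₁ D₂ R₁ R₂ zdag).1
      = mv R₁ zdag.2.2.1 - mv R₁' zdag.2.2.1 := by
    simp only [Fop, Prod.fst_sub]
    abel
  have c2 : (Fop ε₁ ε₂ ν₁ ν₂ D₁ D₂ R₁' R₂' zdag - Fop ε₁ ε₂ ν₁ ν₂ D₁ D₂ R₁ R₂ zdag).2.1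
      = mv R₂ zdag.2.2.2 - mv R₂' zdag.2.2.2 := by
    simp only [Fop, Prod.fst_sub, Prod.snd_sub]
    abel
  have c3 : (Fop ε₁ ε₂ ν₁ ν₂ D₁ D₂ R₁' R₂' zdag - Fop ε₁ ε₂ ν₁ ν₂ D₁ D₂ R₁ R₂ zdag).2.2.1
      = mv R₁'.transpose zdag.1 - mv R₁.transpose zdag.1 := by
    simp only [Fop, Prod.fst_sub, Prod.snd_sub]
    abel
  have c4 : (Fop ε₁ ε₂ ν₁ ν₂ D₁ D₂ R₁' R₂' zdag - Fop ε₁ ε₂ ν₁ ν₂ D₁ D₂ R₁ R₂ zdag).2.2.2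
      = mv R₂'.transpose zdag.2.1 - mv R₂.transpose zdag.2.1 := by
    simp only [Fop, Prod.fst_sub, Prod.snd_sub]
    abel
  have n1 : ‖(Fop ε₁ ε₂ ν₁ ν₂ D₁ D₂ R₁' R₂' zdag - Fop ε₁ ε₂ ν₁ ν₂ D₁ D₂ R₁ R₂ zdag).1‖
      ≤ Real.sqrt a₁ * d := by
    rw [c1]; exact mv_diff_norm R₁ R₁' hd3 hd0 hentry1
  have n2 : ‖(Fop ε₁ ε₂ ν₁ ν₂ D₁ D₂ R₁' R₂' zdag - Fop ε₁ ε₂ ν₁ ν₂ D₁ D₂ R₁ R₂ zdag).2.1‖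
      ≤ Real.sqrt a₂ * d := by
    rw [c2]; exact mv_diff_norm R₂ R₂' hd4 hd0 hentry2
  have n3 : ‖(Fop ε₁ ε₂ ν₁ ν₂ D₁ D₂ R₁' R₂' zdag - Fop ε₁ ε₂ ν₁ ν₂ D₁ D₂ R₁ R₂ zdag).2.2.1‖
      ≤ Real.sqrt a₂ * d := by
    rw [c3]
    refine mv_diff_norm R₁'.transpose R₁.transpose hd1 hd0 fun k j => ?_
    rw [Matrix.transpose_apply, Matrix.transpose_apply, abs_sub_comm]
    exact hentry1 j k
  have n4 : ‖(Fop ε₁ ε₂ ν₁ ν₂ D₁ D₂ R₁' R₂' zdag - Fop ε₁ ε₂ ν₁ ν₂ D₁ D₂ R₁ R₂ zdag).2.2.2‖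
      ≤ Real.sqrt a₁ * d := by
    rw [c4]
    refine mv_diff_norm R₂'.transpose R₂.transpose hd2 hd0 fun k j => ?_
    rw [Matrix.transpose_apply, Matrix.transpose_apply, abs_sub_comm]
    exact hentry2 j k
  set N := Real.sqrt (jnormSq (zstar - zdag)) with hN
  have hN0 : (0 : ℝ) ≤ N := Real.sqrt_nonneg _
  have hjnn : 0 ≤ jnormSq (zstar - zdag) := by
    simp only [jnormSq]
    positivity
  have hN2 : jnormSq (zstar - zdag) = N ^ 2 := by
    rw [hN, Real.sq_sqrt hjnn]
  have hw1 : ‖(zstar - zdag).1‖ ≤ N := by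
    rw [hN, ← Real.sqrt_sq (norm_nonneg ((zstar - zdag).1))]
    apply Real.sqrt_le_sqrt
    simp only [jnormSq]
    nlinarith [sq_nonneg ‖(zstar - zdag).2.1‖, sq_nonneg ‖(zstar - zdag).2.2.1‖,
      sq_nonneg ‖(zstar - zdag).2.2.2‖]
  have hw2 : ‖(zstar - zdag).2.1‖ ≤ N := by
    rw [hN, ← Real.sqrt_sq (norm_nonneg ((zstar - zdag).2.1))]
    apply Real.sqrt_le_sqrt
    simp only [jnormSq]
    nlinarith [sq_nonneg ‖(zstar - zdag).1‖, sq_nonneg ‖(zstar - zdag).2.2.1‖,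
      sq_nonneg ‖(zstar - zdag).2.2.2‖]
  have hw3 : ‖(zstar - zdag).2.2.1‖ ≤ N := by
    rw [hN, ← Real.sqrt_sq (norm_nonneg ((zstar - zdag).2.2.1))]
    apply Real.sqrt_le_sqrt
    simp only [jnormSq]
    nlinarith [sq_nonneg ‖(zstar - zdag).1‖, sq_nonneg ‖(zstar - zdag).2.1‖,
      sq_nonneg ‖(zstar - zdag).2.2.2‖]
  have hw4 : ‖(zstar - zdag).2.2.2‖ ≤ N := by
    rw [hN, ← Real.sqrt_sq (norm_nonneg ((zstar - zdag).2.2.2))]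
    apply Real.sqrt_le_sqrt
    simp only [jnormSq]
    nlinarith [sq_nonneg ‖(zstar - zdag).1‖, sq_nonneg ‖(zstar - zdag).2.1‖,
      sq_nonneg ‖(zstar - zdag).2.2.1‖]
  have hbound : jip (zstar - zdag) (Fop ε₁ ε₂ ν₁ ν₂ D₁ D₂ R₁' R₂' zdag
      - Fop ε₁ ε₂ ν₁ ν₂ D₁ D₂ R₁ R₂ zdag)
      ≤ N * (2 * (Real.sqrt a₁ + Real.sqrt a₂) * d) := by
    have sqrtd1 : (0 : ℝ) ≤ Real.sqrt a₁ * d := by positivity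
    have sqrtd2 : (0 : ℝ) ≤ Real.sqrt a₂ * d := by positivity
    have b1 := le_trans
      (real_inner_le_norm ((zstar - zdag).1)
        ((Fop ε₁ ε₂ ν₁ ν₂ D₁ D₂ R₁' R₂' zdag - Fop ε₁ ε₂ ν₁ ν₂ D₁ D₂ R₁ R₂ zdag).1))
      (mul_le_mul hw1 n1 (norm_nonneg _) hN0)
    have b2 := le_trans
      (real_inner_le_norm ((zstar - zdag).2.1)
        ((Fop ε₁ ε₂ ν₁ ν₂ D₁ D₂ R₁' R₂' zdag - Fop ε₁ ε₂ ν₁ ν₂ D₁ D₂ R₁ R₂ zdag).2.1))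
      (mul_le_mul hw2 n2 (norm_nonneg _) hN0)
    have b3 := le_trans
      (real_inner_le_norm ((zstar - zdag).2.2.1)
        ((Fop ε₁ ε₂ ν₁ ν₂ D₁ D₂ R₁' R₂' zdag - Fop ε₁ ε₂ ν₁ ν₂ D₁ D₂ R₁ R₂ zdag).2.2.1))
      (mul_le_mul hw3 n3 (norm_nonneg _) hN0)
    have b4 := le_trans
      (real_inner_le_norm ((zstar - zdag).2.2.2)
        ((Fop ε₁ ε₂ ν₁ ν₂ D₁ D₂ R₁' R₂' zdag - Fop ε₁ ε₂ ν₁ ν₂ D₁ D₂ R₁ R₂ zdag).2.2.2))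
      (mul_le_mul hw4 n4 (norm_nonneg _) hN0)
    simp only [jip]
    nlinarith [b1, b2, b3, b4]
  have hαN : α * N ^ 2 ≤ N * (2 * (Real.sqrt a₁ + Real.sqrt a₂) * d) := by
    rw [← hN2]
    exact le_trans key hbound
  have hC0 : (0 : ℝ) ≤ 2 * (Real.sqrt a₁ + Real.sqrt a₂) * d := by positivity
  have hmain : N ≤ 2 * (Real.sqrt a₁ + Real.sqrt a₂) * d / α := by
    rcases eq_or_lt_of_le hN0 with h0 | h0
    · rw [← h0]
      exact div_nonneg hC0 (le_of_lt hα)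
    · rw [le_div_iff₀ hα]
      have h2 : (α * N) * N ≤ (2 * (Real.sqrt a₁ + Real.sqrt a₂) * d) * N := by
        calc (α * N) * N = α * N ^ 2 := by ring
          _ ≤ N * (2 * (Real.sqrt a₁ + Real.sqrt a₂) * d) := hαN
          _ = (2 * (Real.sqrt a₁ + Real.sqrt a₂) * d) * N := by ring
      have h3 := le_of_mul_le_mul_right h2 h0
      linarith
  refine ⟨hmain, le_trans ?_ hmain⟩
  apply Real.sqrt_le_sqrt
  simp only [jnormSq, Prod.fst_sub, Prod.snd_sub]
  nlinarith [sq_nonneg ‖zstar.2.2.1 - zdag.2.2.1‖, sq_nonneg ‖zstar.2.2.2 - zdag.2.2.2‖]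
end
end

section
/- Let R and R' be payoff pairs, let z* = (π₁*, π₂*, p₁*, p₂*) be a Nash equilibrium of the modified 4-player game with payoff pair R, and let z† = (π₁†, π₂†, p₁†, p₂†) be a Nash equilibrium with payoff pair R'. Then for each i ∈ {1, 2}: J_i(z*; R) − J_i(z†; R') ≤ (π_i†)ᵀ(R_i' − R_i)p_i* − D_i(p_i*, π_{−i}*) + D_i(p_i*, π_{−i}†). -/
noncomputable section

/-- If `z*` is a Nash equilibrium of the modified 4-player game for payoff
pair `R` and `z†` for payoff pair `R'`, then for each player
`Jᵢ(z*; R) − Jᵢ(z†; R') ≤ (πᵢ†)ᵀ(Rᵢ' − Rᵢ)pᵢ* − Dᵢ(pᵢ*, π₋ᵢ*) + Dᵢ(pᵢ*, π₋ᵢ†)`. -/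
theorem nash_value_comparison
    {a₁ a₂ : ℕ} (ha₁ : 1 ≤ a₁) (ha₂ : 1 ≤ a₂)
    (ε₁ ε₂ : ℝ) (hε₁ : 0 < ε₁) (hε₂ : 0 < ε₂)
    (ν₁ : Vec a₁ → ℝ) (ν₂ : Vec a₂ → ℝ)
    (D₁ : Vec a₂ → Vec a₂ → ℝ) (D₂ : Vec a₁ → Vec a₁ → ℝ)
    (R₁ R₁' : Matrix (Fin a₁) (Fin a₂) ℝ) (R₂ R₂' : Matrix (Fin a₂) (Fin a₁) ℝ)
    (zstar zdag : Joint a₁ a₂)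
    (hzstar : IsNash ε₁ ε₂ ν₁ ν₂ D₁ D₂ R₁ R₂ zstar)
    (hzdag : IsNash ε₁ ε₂ ν₁ ν₂ D₁ D₂ R₁' R₂' zdag) :
    J1 ε₁ ν₁ D₁ R₁ zstar - J1 ε₁ ν₁ D₁ R₁' zdag
        ≤ (inner ℝ zdag.1 (mv (R₁' - R₁) zstar.2.2.1) : ℝ)
            - D₁ zstar.2.2.1 zstar.2.1 + D₁ zstar.2.2.1 zdag.2.1
    ∧ J2 ε₂ ν₂ D₂ R₂ zstar - J2 ε₂ ν₂ D₂ R₂' zdag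
        ≤ (inner ℝ zdag.2.1 (mv (R₂' - R₂) zstar.2.2.2) : ℝ)
            - D₂ zstar.2.2.2 zstar.1 + D₂ zstar.2.2.2 zdag.1 := by
  obtain ⟨⟨hπ1s, hπ2s, hp1s, hp2s⟩, h1s, h2s, h3s, h4s⟩ := hzstar
  obtain ⟨⟨hπ1d, hπ2d, hp1d, hp2d⟩, h1d, h2d, h3d, h4d⟩ := hzdag
  constructor
  · have hA := h1s zdag.1 hπ1d
    have hB := h3d zstar.2.2.1 hp1s
    have hsub : (inner ℝ zdag.1 (mv (R₁' - R₁) zstar.2.2.1) : ℝ)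
        = (inner ℝ zdag.1 (mv R₁' zstar.2.2.1) : ℝ) - (inner ℝ zdag.1 (mv R₁ zstar.2.2.1) : ℝ) := by
      have : mv (R₁' - R₁) zstar.2.2.1 = mv R₁' zstar.2.2.1 - mv R₁ zstar.2.2.1 := by
        ext k
        simp [mv, Matrix.sub_apply, sub_mul, Finset.sum_sub_distrib]
      rw [this, inner_sub_right]
    simp only [J1] at hA hB ⊢
    rw [hsub]
    linarith
  · have hA := h2s zdag.2.1 hπ2d
    have hB := h4d zstar.2.2.2 hp2s
    have hsub : (inner ℝ zdag.2.1 (mv (R₂' - R₂) zstar.2.2.2) : ℝ)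
        = (inner ℝ zdag.2.1 (mv R₂' zstar.2.2.2) : ℝ) - (inner ℝ zdag.2.1 (mv R₂ zstar.2.2.2) : ℝ) := by
      have : mv (R₂' - R₂) zstar.2.2.2 = mv R₂' zstar.2.2.2 - mv R₂ zstar.2.2.2 := by
        ext k
        simp [mv, Matrix.sub_apply, sub_mul, Finset.sum_sub_distrib]
      rw [this, inner_sub_right]
    simp only [J2] at hA hB ⊢
    rw [hsub]
    linarith
end
end

section
/- Let S and X be nonempty finite sets, γ ∈ [0, 1), K ≥ 0, r : S × X → ℝ, P : S × X → Δ_S, and for each (s, x) let D(·; s, x) : Δ_S → ℝ be bounded below. Let g : (X → ℝ) × (X → ℝ) → ℝ² be K-Lipschitz with respect to the sup norm on its domain and the sup norm on ℝ². For a pair of functions Q = (Q₁, Q₂) with Q_i : S × X → ℝ, define (T Q)_i(s, x) = r(s, x) + γ·inf_{P̃ ∈ Δ_S} { Σ_{s'} P̃(s')·g_i(Q₁(s', ·), Q₂(s', ·)) + D(P̃; s, x) }, where g_i denotes the i-th component of g. Then for all pairs Q, Q': max_{i,s,x} |(T Q)_i(s, x) − (T Q')_i(s, x)| ≤ γK·max_{i,s,x}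 |Q_i(s, x) − Q_i'(s, x)|. -/
noncomputable section

/-- The risk-averse Bellman-type operator with per-state value map `g`:
`(T Q)ᵢ(s, x) = r(s, x) + γ · inf_{P̃ ∈ Δ_S} { ∑_{s'} P̃(s') gᵢ(Q₁(s',·), Q₂(s',·)) + D(P̃; s, x) }`. -/
def bellmanT {S X : Type*} [Fintype S] (γ : ℝ) (r : S × X → ℝ)
    (D : S → X → (S → ℝ) → ℝ) (g : (X → ℝ) × (X → ℝ) → ℝ × ℝ)
    (Q : (S × X → ℝ) × (S × X → ℝ)) : (S × X → ℝ) × (S × X → ℝ) :=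
  (fun sx => r sx + γ * ⨅ Pt : stdSimplex ℝ S,
      ((∑ s', (Pt : S → ℝ) s' * (g (fun a => Q.1 (s', a), fun a => Q.2 (s', a))).1)
        + D sx.1 sx.2 Pt),
   fun sx => r sx + γ * ⨅ Pt : stdSimplex ℝ S,
      ((∑ s', (Pt : S → ℝ) s' * (g (fun a => Q.1 (s', a), fun a => Q.2 (s', a))).2)
        + D sx.1 sx.2 Pt))

lemma aux_bdd {S : Type*} [Fintype S] (a : S → ℝ) (Dv : (S → ℝ) → ℝ)
    (hD : BddBelow (Dv '' stdSimplex ℝ S)) :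
    BddBelow (Set.range fun Pt : stdSimplex ℝ S =>
      (∑ s', (Pt : S → ℝ) s' * a s') + Dv (Pt : S → ℝ)) := by
  obtain ⟨m, hm⟩ := hD
  refine ⟨-(∑ s', |a s'|) + m, ?_⟩
  rintro _ ⟨Pt, rfl⟩
  have h1 : ∑ s', (Pt : S → ℝ) s' = 1 := Pt.2.2
  have hnn : ∀ s', 0 ≤ (Pt : S → ℝ) s' := Pt.2.1
  have hsum : -(∑ s', |a s'|) ≤ ∑ s', (Pt : S → ℝ) s' * a s' := by
    have hstep : ∀ s' ∈ Finset.univ, (Pt : S → ℝ) s' * (-(∑ t, |a t|)) ≤ (Pt : S → ℝ) s' * a s' := by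
      intro s' _
      apply mul_le_mul_of_nonneg_left _ (hnn s')
      have h2 : |a s'| ≤ ∑ t, |a t| :=
        Finset.single_le_sum (fun i _ => abs_nonneg (a i)) (Finset.mem_univ s')
      linarith [neg_abs_le (a s')]
    calc -(∑ s', |a s'|) = ∑ s', (Pt : S → ℝ) s' * (-(∑ t, |a t|)) := by
            rw [← Finset.sum_mul, h1, one_mul]
      _ ≤ _ := Finset.sum_le_sum hstep
  have hDm : m ≤ Dv (Pt : S → ℝ) := hm ⟨(Pt : S → ℝ), Pt.2, rfl⟩
  simp only
  linarith

lemma abs_ciInf_sub_ciInf {ι : Type*} [Nonempty ι] {f f' : ι → ℝ} {c : ℝ}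
    (hf : BddBelow (Set.range f)) (hf' : BddBelow (Set.range f'))
    (h : ∀ i, |f i - f' i| ≤ c) :
    |(⨅ i, f i) - ⨅ i, f' i| ≤ c := by
  rw [abs_sub_le_iff]
  constructor
  · have key : (⨅ i, f i) - c ≤ ⨅ i, f' i := le_ciInf fun i => by
      have h1 := ciInf_le hf i
      have h2 := (abs_sub_le_iff.mp (h i)).1
      linarith
    linarith
  · have key : (⨅ i, f' i) - c ≤ ⨅ i, f i := le_ciInf fun i => by
      have h1 := ciInf_le hf' i
      have h2 := (abs_sub_le_iff.mp (h i)).2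
      linarith
    linarith

/-- If `g` is `K`-Lipschitz with respect to sup norms, the Bellman-type
operator `T` satisfies `‖T Q − T Q'‖_∞ ≤ γ K ‖Q − Q'‖_∞` (norms here are the sup norms over
`i`, `s`, `x`). -/
theorem bellmanT_lipschitz
    {S X : Type*} [Fintype S] [Fintype X] [Nonempty S] [Nonempty X]
    (γ : ℝ) (hγ0 : 0 ≤ γ) (hγ1 : γ < 1) (K : ℝ) (hK : 0 ≤ K)
    (r : S × X → ℝ)
    (P : S × X → S → ℝ) (hP : ∀ sx, P sx ∈ stdSimplex ℝ S)
    (D : S → X → (S → ℝ) → ℝ)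
    (hD : ∀ s x, BddBelow ((fun Pt => D s x Pt) '' stdSimplex ℝ S))
    (g : (X → ℝ) × (X → ℝ) → ℝ × ℝ)
    (hg : ∀ u v : (X → ℝ) × (X → ℝ), ‖g u - g v‖ ≤ K * ‖u - v‖) :
    ∀ Q Q' : (S × X → ℝ) × (S × X → ℝ),
      ‖bellmanT γ r D g Q - bellmanT γ r D g Q'‖ ≤ γ * K * ‖Q - Q'‖ := by
  intro Q Q'
  have hne : Nonempty (stdSimplex ℝ S) := ⟨⟨P (Classical.arbitrary _), hP _⟩⟩
  set c := K * ‖Q - Q'‖ with hc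
  have hc0 : 0 ≤ c := mul_nonneg hK (norm_nonneg _)
  -- pointwise bound on g components
  have hgpt : ∀ s' : S,
      |(g (fun a => Q.1 (s', a), fun a => Q.2 (s', a))).1 -
        (g (fun a => Q'.1 (s', a), fun a => Q'.2 (s', a))).1| ≤ c ∧
      |(g (fun a => Q.1 (s', a), fun a => Q.2 (s', a))).2 -
        (g (fun a => Q'.1 (s', a), fun a => Q'.2 (s', a))).2| ≤ c := by
    intro s'
    set u : (X → ℝ) × (X → ℝ) := (fun a => Q.1 (s', a), fun a => Q.2 (s', a))
    set v : (X → ℝ) × (X → ℝ) := (fun a => Q'.1 (s', a), fun a => Q'.2 (s', a))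
    have huv : ‖u - v‖ ≤ ‖Q - Q'‖ := by
      rw [Prod.norm_def]
      apply max_le
      · apply (pi_norm_le_iff_of_nonneg (norm_nonneg (Q - Q'))).mpr
        intro a
        have h1 : (u - v).1 a = (Q - Q').1 (s', a) := rfl
        rw [h1]
        exact le_trans (norm_le_pi_norm (Q - Q').1 (s', a)) (norm_fst_le (Q - Q'))
      · apply (pi_norm_le_iff_of_nonneg (norm_nonneg (Q - Q'))).mpr
        intro a
        have h1 : (u - v).2 a = (Q - Q').2 (s', a) := rfl
        rw [h1]
        exact le_trans (norm_le_pi_norm (Q - Q').2 (s', a)) (norm_snd_le (Q - Q'))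
    have hguv : ‖g u - g v‖ ≤ c := le_trans (hg u v) (mul_le_mul_of_nonneg_left huv hK)
    constructor
    · calc |(g u).1 - (g v).1| = ‖(g u - g v).1‖ := by rw [Real.norm_eq_abs]; rfl
        _ ≤ ‖g u - g v‖ := norm_fst_le _
        _ ≤ c := hguv
    · calc |(g u).2 - (g v).2| = ‖(g u - g v).2‖ := by rw [Real.norm_eq_abs]; rfl
        _ ≤ ‖g u - g v‖ := norm_snd_le _
        _ ≤ c := hguv
  -- generic weighted-average bound
  have hwavg : ∀ (a a' : S → ℝ), (∀ s', |a s' - a' s'| ≤ c) → ∀ Pt : stdSimplex ℝ S,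
      |(∑ s', (Pt : S → ℝ) s' * a s') - ∑ s', (Pt : S → ℝ) s' * a' s'| ≤ c := by
    intro a a' ha Pt
    have h1 : ∑ s', (Pt : S → ℝ) s' = 1 := Pt.2.2
    have hnn : ∀ s', 0 ≤ (Pt : S → ℝ) s' := Pt.2.1
    rw [← Finset.sum_sub_distrib]
    calc |∑ s', ((Pt : S → ℝ) s' * a s' - (Pt : S → ℝ) s' * a' s')|
        ≤ ∑ s', |(Pt : S → ℝ) s' * a s' - (Pt : S → ℝ) s' * a' s'| :=
          Finset.abs_sum_le_sum_abs _ _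
      _ ≤ ∑ s', (Pt : S → ℝ) s' * c := by
          apply Finset.sum_le_sum
          intro s' _
          rw [← mul_sub, abs_mul, abs_of_nonneg (hnn s')]
          exact mul_le_mul_of_nonneg_left (ha s') (hnn s')
      _ = c := by rw [← Finset.sum_mul, h1, one_mul]
  -- per-state-action bound for each component
  have hmain : ∀ sx : S × X,
      |(bellmanT γ r D g Q).1 sx - (bellmanT γ r D g Q').1 sx| ≤ γ * c ∧
      |(bellmanT γ r D g Q).2 sx - (bellmanT γ r D g Q').2 sx| ≤ γ * c := by
    intro sx
    constructor
    · show |(r sx + γ * _) - (r sx + γ * _)| ≤ γ * c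
      have heq : ∀ (A B : ℝ), (r sx + γ * A) - (r sx + γ * B) = γ * (A - B) := by
        intro A B; ring
      rw [heq, abs_mul, abs_of_nonneg hγ0]
      apply mul_le_mul_of_nonneg_left _ hγ0
      apply abs_ciInf_sub_ciInf (aux_bdd _ _ (hD sx.1 sx.2)) (aux_bdd _ _ (hD sx.1 sx.2))
      intro Pt
      have := hwavg (fun s' => (g (fun a => Q.1 (s', a), fun a => Q.2 (s', a))).1)
        (fun s' => (g (fun a => Q'.1 (s', a), fun a => Q'.2 (s', a))).1)
        (fun s' => (hgpt s').1) Pt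
      simpa using this
    · show |(r sx + γ * _) - (r sx + γ * _)| ≤ γ * c
      have heq : ∀ (A B : ℝ), (r sx + γ * A) - (r sx + γ * B) = γ * (A - B) := by
        intro A B; ring
      rw [heq, abs_mul, abs_of_nonneg hγ0]
      apply mul_le_mul_of_nonneg_left _ hγ0
      apply abs_ciInf_sub_ciInf (aux_bdd _ _ (hD sx.1 sx.2)) (aux_bdd _ _ (hD sx.1 sx.2))
      intro Pt
      have := hwavg (fun s' => (g (fun a => Q.1 (s', a), fun a => Q.2 (s', a))).2)
        (fun s' => (g (fun a => Q'.1 (s', a), fun a => Q'.2 (s', a))).2)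
        (fun s' => (hgpt s').2) Pt
      simpa using this
  have hγc : γ * c = γ * K * ‖Q - Q'‖ := by rw [hc]; ring
  rw [← hγc, Prod.norm_def]
  have hγc0 : 0 ≤ γ * c := mul_nonneg hγ0 hc0
  apply max_le
  · apply (pi_norm_le_iff_of_nonneg hγc0).mpr
    intro sx
    rw [Real.norm_eq_abs]
    exact (hmain sx).1
  · apply (pi_norm_le_iff_of_nonneg hγc0).mpr
    intro sx
    rw [Real.norm_eq_abs]
    exact (hmain sx).2
end
end

section
/- Let (X, ‖·‖) be a complete normed real vector space, let c ∈ [0, 1), and let T : X → X satisfy ‖T u − T v‖ ≤ c‖u − v‖ for all u, v ∈ X, with fixed point u* (T u* = u*). Let (α_t)_{t≥0} be a sequence with α_t ≥ 0, Σ_{t=0}^∞ α_t = ∞ and Σ_{t=0}^∞ α_t² < ∞, and define the iteration u_0 ∈ X arbitrary, u_{t+1} = (1 − α_t)u_t + α_t·T(u_t). Then u_t converges to u* as t → ∞. -/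
/-- Let `T` be a contraction with constant `c < 1` on a complete normed
real vector space, with fixed point `u*`. For step sizes `αₜ ≥ 0` with `∑ αₜ = ∞` and
`∑ αₜ² < ∞`, the damped iteration `u_{t+1} = (1 − αₜ) uₜ + αₜ T(uₜ)` converges to `u*`. -/
theorem damped_fixed_point_iteration_converges
    {X : Type*} [NormedAddCommGroup X] [NormedSpace ℝ X] [CompleteSpace X]
    (c : ℝ) (hc0 : 0 ≤ c) (hc1 : c < 1)
    (T : X → X) (hT : ∀ u v : X, ‖T u - T v‖ ≤ c * ‖u - v‖)
    (ustar : X) (hfix : T ustar = ustar)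
    (α : ℕ → ℝ) (hα0 : ∀ t, 0 ≤ α t)
    (hdiv : Filter.Tendsto (fun n => ∑ t ∈ Finset.range n, α t) Filter.atTop Filter.atTop)
    (hsq : Summable (fun t => (α t) ^ 2))
    (u : ℕ → X) (hu : ∀ t, u (t + 1) = (1 - α t) • u t + (α t) • T (u t)) :
    Filter.Tendsto u Filter.atTop (nhds ustar) := by
  -- α² → 0, hence eventually α t ≤ 1
  have h2 : Filter.Tendsto (fun t => (α t) ^ 2) Filter.atTop (nhds 0) :=
    hsq.tendsto_atTop_zero
  have hev : ∀ᶠ t in Filter.atTop, α t ≤ 1 := by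
    filter_upwards [h2.eventually (gt_mem_nhds (by norm_num : (0:ℝ) < 1))] with t ht
    nlinarith [hα0 t]
  obtain ⟨N, hN⟩ := Filter.eventually_atTop.mp hev
  set d : ℕ → ℝ := fun t => ‖u t - ustar‖ with hd
  have hd0 : ∀ t, 0 ≤ d t := fun t => norm_nonneg _
  -- key one-step estimate
  have key : ∀ t, α t ≤ 1 → d (t + 1) ≤ (1 - (1 - c) * α t) * d t := by
    intro t ht1
    have : u (t + 1) - ustar = (1 - α t) • (u t - ustar) + (α t) • (T (u t) - T ustar) := by
      rw [hu t, hfix]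
      module
    calc d (t + 1) = ‖(1 - α t) • (u t - ustar) + (α t) • (T (u t) - T ustar)‖ := by
          simp only [hd]
          rw [this]
      _ ≤ ‖(1 - α t) • (u t - ustar)‖ + ‖(α t) • (T (u t) - T ustar)‖ := norm_add_le _ _
      _ = |1 - α t| * ‖u t - ustar‖ + |α t| * ‖T (u t) - T ustar‖ := by
          rw [norm_smul, norm_smul, Real.norm_eq_abs, Real.norm_eq_abs]
      _ ≤ (1 - α t) * d t + α t * (c * d t) := by
          have h1 : |1 - α t| = 1 - α t := abs_of_nonneg (by linarith)
          have h2 : |α t| = α t := abs_of_nonneg (hα0 t)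
          rw [h1, h2]
          have := hT (u t) ustar
          have := mul_le_mul_of_nonneg_left this (hα0 t)
          simp only [hd]
          linarith
      _ = (1 - (1 - c) * α t) * d t := by ring
  -- iterated bound via exp
  have hbound : ∀ k, d (N + k) ≤ d N * Real.exp (-((1 - c) * ∑ i ∈ Finset.range k, α (N + i))) := by
    intro k
    induction k with
    | zero => simp
    | succ k ih =>
      have ht1 : α (N + k) ≤ 1 := hN _ (Nat.le_add_right _ _)
      have hstep := key (N + k) ht1
      have hfac : 0 ≤ 1 - (1 - c) * α (N + k) := by nlinarith [hα0 (N + k)]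
      have hexp : 1 - (1 - c) * α (N + k) ≤ Real.exp (-((1 - c) * α (N + k))) := by
        have := Real.add_one_le_exp (-((1 - c) * α (N + k)))
        linarith
      calc d (N + (k + 1)) = d (N + k + 1) := by ring_nf
        _ ≤ (1 - (1 - c) * α (N + k)) * d (N + k) := hstep
        _ ≤ Real.exp (-((1 - c) * α (N + k))) * (d N * Real.exp (-((1 - c) * ∑ i ∈ Finset.range k, α (N + i)))) := by
            apply mul_le_mul hexp ih (hd0 _) (Real.exp_nonneg _)
        _ = d N * Real.exp (-((1 - c) * ∑ i ∈ Finset.range (k + 1), α (N + i))) := by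
            rw [Finset.sum_range_succ, mul_add, neg_add, Real.exp_add]
            ring
  -- the tail sums tend to ∞
  have hS : Filter.Tendsto (fun k => ∑ i ∈ Finset.range k, α (N + i)) Filter.atTop Filter.atTop := by
    have heq : ∀ k, ∑ i ∈ Finset.range k, α (N + i)
        = (∑ t ∈ Finset.range (N + k), α t) - ∑ t ∈ Finset.range N, α t := by
      intro k; rw [Finset.sum_range_add]; ring
    simp only [heq]
    apply Filter.tendsto_atTop_add_const_right
    exact hdiv.comp (Filter.tendsto_atTop_mono (fun k => Nat.le_add_left k N) Filter.tendsto_id)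
  -- hence the bound tends to 0
  have hB : Filter.Tendsto (fun k => d N * Real.exp (-((1 - c) * ∑ i ∈ Finset.range k, α (N + i))))
      Filter.atTop (nhds 0) := by
    rw [show (0:ℝ) = d N * 0 by ring]
    apply Filter.Tendsto.const_mul
    apply Real.tendsto_exp_atBot.comp
    apply Filter.tendsto_neg_atBot_iff.mpr
    exact Filter.Tendsto.const_mul_atTop (by linarith) hS
  -- squeeze
  have hshift : Filter.Tendsto (fun k => d (N + k)) Filter.atTop (nhds 0) :=
    squeeze_zero (fun k => hd0 _) hbound hB
  have hdto0 : Filter.Tendsto d Filter.atTop (nhds 0) := by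
    have : Filter.Tendsto (fun k => d (k + N)) Filter.atTop (nhds 0) := by
      simpa [Nat.add_comm] using hshift
    exact (Filter.tendsto_add_atTop_iff_nat N).mp this
  exact tendsto_iff_norm_sub_tendsto_zero.mpr hdto0
end
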